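/- Let G be a group and let C be a subgroup of finite index m in [G, G^φ] ≤ ν(G). Then for every b ∈ [G, G^φ], the coset Cb contains an element h that can be written as a product of at most m − 1 tensors (i.e. l⊗(h) ≤ m − 1, with the convention that the identity is a product of 0 tensors). -/

import Mathlib

namespace TensorNu

universe u

/-- The commutator `[x,y] = x⁻¹y⁻¹xy`. -/
def comm {K : Type*} [Group K] (x y : K) : K := x⁻¹ * y⁻¹ * x * y

/-- Conjugation `x^y = y⁻¹xy`. -/
def conj {K : Type*} [Group K] (x y : K) : K := y⁻¹ * x * y

variable (G : Type u) [Group G]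

/-- The defining relators of `ν(G)`, as elements of the free group on `G ⊕ G`,
where `Sum.inl` corresponds to the canonical copy of `G` and `Sum.inr` to the
isomorphic copy `G^φ` (`g ↦ g^φ`).  They comprise the multiplication tables of
`G` and of `G^φ`, together with the relations
`[g₁,g₂^φ]^{g₃} = [g₁^{g₃},(g₂^{g₃})^φ]` and `[g₁,g₂^φ]^{g₃} = [g₁,g₂^φ]^{g₃^φ}`. -/
def nuRels : Set (FreeGroup (G ⊕ G)) :=
  {r | (∃ g h : G, r = FreeGroup.of (Sum.inl g) * FreeGroup.of (Sum.inl h) *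
          (FreeGroup.of (Sum.inl (g * h)))⁻¹)
     ∨ (∃ g h : G, r = FreeGroup.of (Sum.inr g) * FreeGroup.of (Sum.inr h) *
          (FreeGroup.of (Sum.inr (g * h)))⁻¹)
     ∨ (∃ g₁ g₂ g₃ : G, r =
          conj (comm (FreeGroup.of (Sum.inl g₁)) (FreeGroup.of (Sum.inr g₂)))
              (FreeGroup.of (Sum.inl g₃)) *
            (comm (FreeGroup.of (Sum.inl (conj g₁ g₃)))
              (FreeGroup.of (Sum.inr (conj g₂ g₃))))⁻¹)
     ∨ (∃ g₁ g₂ g₃ : G, r =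
          conj (comm (FreeGroup.of (Sum.inl g₁)) (FreeGroup.of (Sum.inr g₂)))
              (FreeGroup.of (Sum.inl g₃)) *
            (conj (comm (FreeGroup.of (Sum.inl g₁)) (FreeGroup.of (Sum.inr g₂)))
              (FreeGroup.of (Sum.inr g₃)))⁻¹)}

/-- The group `ν(G)`. -/
abbrev Nu := PresentedGroup (nuRels G)

/-- The canonical image of `g ∈ G` in `ν(G)`. -/
def ι (g : G) : Nu G := PresentedGroup.of (Sum.inl g)

/-- The canonical image `g^φ` of `g ∈ G` (via the copy `G^φ`) in `ν(G)`. -/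
def ιφ (g : G) : Nu G := PresentedGroup.of (Sum.inr g)

/-- The set `T⊗(G)` of tensors `[a, b^φ]`, `a, b ∈ G`. -/
def tensorSet : Set (Nu G) := {x | ∃ a b : G, x = comm (ι G a) (ιφ G b)}

/-- The image of `G` in `ν(G)` as a subgroup. -/
def GSub : Subgroup (Nu G) := Subgroup.closure (Set.range (ι G))

/-- The image of `G^φ` in `ν(G)` as a subgroup. -/
def GφSub : Subgroup (Nu G) := Subgroup.closure (Set.range (ιφ G))

/-- The non-abelian tensor square `[G, G^φ] ≤ ν(G)`. -/
def tensorSquare : Subgroup (Nu G) := ⁅GSub G, GφSub G⁆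

/-- `[S, x]`: the subgroup generated by the commutators `[s, x]`, `s ∈ S`. -/
def commSub {K : Type*} [Group K] (S : Set K) (x : K) : Subgroup K :=
  Subgroup.closure {c | ∃ s ∈ S, c = comm s x}

end TensorNu

namespace TensorNu

universe u
variable {G : Type u} [Group G]

lemma map_comm' {K L : Type*} [Group K] [Group L] (f : K →* L) (x y : K) :
    f (comm x y) = comm (f x) (f y) := by simp [comm]

lemma map_conj' {K L : Type*} [Group K] [Group L] (f : K →* L) (x y : K) :
    f (conj x y) = conj (f x) (f y) := by simp [conj]

lemma mk_rel_eq_one {r : FreeGroup (G ⊕ G)} (hr : r ∈ nuRels G) :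
    PresentedGroup.mk (nuRels G) r = 1 :=
  (QuotientGroup.eq_one_iff r).2 (Subgroup.subset_normalClosure hr)

lemma ι_mul (g h : G) : ι G g * ι G h = ι G (g * h) := by
  have := mk_rel_eq_one (G := G) (Or.inl ⟨g, h, rfl⟩)
  simpa [ι, PresentedGroup.of, map_mul, map_inv, mul_inv_eq_one] using this

lemma ιφ_mul (g h : G) : ιφ G g * ιφ G h = ιφ G (g * h) := by
  have := mk_rel_eq_one (G := G) (Or.inr (Or.inl ⟨g, h, rfl⟩))
  simpa [ιφ, PresentedGroup.of, map_mul, map_inv, mul_inv_eq_one] using this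

lemma ι_one : ι G 1 = 1 := by
  have := ι_mul (G := G) 1 1
  rw [mul_one] at this
  exact mul_left_cancel (a := ι G 1) (by rw [this, mul_one])

lemma ιφ_one : ιφ G 1 = 1 := by
  have := ιφ_mul (G := G) 1 1
  rw [mul_one] at this
  exact mul_left_cancel (a := ιφ G 1) (by rw [this, mul_one])

lemma ι_inv (g : G) : (ι G g)⁻¹ = ι G g⁻¹ :=
  inv_eq_of_mul_eq_one_right (by rw [ι_mul, mul_inv_cancel, ι_one])

lemma ιφ_inv (g : G) : (ιφ G g)⁻¹ = ιφ G g⁻¹ :=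
  inv_eq_of_mul_eq_one_right (by rw [ιφ_mul, mul_inv_cancel, ιφ_one])

lemma rel₃ (g₁ g₂ g₃ : G) :
    conj (comm (ι G g₁) (ιφ G g₂)) (ι G g₃)
      = comm (ι G (conj g₁ g₃)) (ιφ G (conj g₂ g₃)) := by
  have := mk_rel_eq_one (G := G) (Or.inr (Or.inr (Or.inl ⟨g₁, g₂, g₃, rfl⟩)))
  rw [map_mul, map_inv, mul_inv_eq_one, map_conj', map_comm', map_comm'] at this
  simpa [ι, ιφ, PresentedGroup.of] using this

lemma rel₄ (g₁ g₂ g₃ : G) :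
    conj (comm (ι G g₁) (ιφ G g₂)) (ι G g₃)
      = conj (comm (ι G g₁) (ιφ G g₂)) (ιφ G g₃) := by
  have := mk_rel_eq_one (G := G) (Or.inr (Or.inr (Or.inr ⟨g₁, g₂, g₃, rfl⟩)))
  rw [map_mul, map_inv, mul_inv_eq_one, map_conj', map_comm', map_conj', map_comm'] at this
  simpa [ι, ιφ, PresentedGroup.of] using this

end TensorNu
namespace TensorNu

universe u
variable {G : Type u} [Group G]
open scoped commutatorElement

lemma conj_conj {K : Type*} [Group K] (t a b : K) :
    conj (conj t a) b = conj t (a * b) := by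
  simp [conj, mul_assoc]

lemma conj_one {K : Type*} [Group K] (t : K) : conj t 1 = t := by simp [conj]

lemma conj_tensor (x : Nu G) {t : Nu G} (ht : t ∈ tensorSet G) :
    conj t x ∈ tensorSet G := by
  let P : Subgroup (Nu G) :=
    { carrier := {x | (∀ t ∈ tensorSet G, conj t x ∈ tensorSet G) ∧
        (∀ t ∈ tensorSet G, conj t x⁻¹ ∈ tensorSet G)}
      one_mem' := ⟨fun t ht => by simpa [conj_one] using ht,
        fun t ht => by simpa [conj_one] using ht⟩
      mul_mem' := by
        rintro a b ⟨ha₁, ha₂⟩ ⟨hb₁, hb₂⟩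
        refine ⟨fun t ht => ?_, fun t ht => ?_⟩
        · rw [← conj_conj]; exact hb₁ _ (ha₁ _ ht)
        · rw [mul_inv_rev, ← conj_conj]; exact ha₂ _ (hb₂ _ ht)
      inv_mem' := by
        rintro a ⟨ha₁, ha₂⟩
        exact ⟨ha₂, fun t ht => by simpa using ha₁ t ht⟩ }
  have hx : x ∈ P := by
    refine PresentedGroup.generated_by _ P (fun j => ?_) x
    rcases j with g | g
    · constructor
      · rintro t ⟨a, b, rfl⟩
        exact ⟨_, _, rel₃ a b g⟩
      · rintro t ⟨a, b, rfl⟩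
        show conj _ (ι G g)⁻¹ ∈ _
        rw [ι_inv]
        exact ⟨_, _, rel₃ a b g⁻¹⟩
    · constructor
      · rintro t ⟨a, b, rfl⟩
        show conj _ (ιφ G g) ∈ _
        rw [← rel₄]
        exact ⟨_, _, rel₃ a b g⟩
      · rintro t ⟨a, b, rfl⟩
        show conj _ (ιφ G g)⁻¹ ∈ _
        rw [ιφ_inv, ← rel₄]
        exact ⟨_, _, rel₃ a b g⁻¹⟩
  exact hx.1 t ht

lemma one_mem_tensorSet : (1 : Nu G) ∈ tensorSet G :=
  ⟨1, 1, by simp [comm, ι_one, ιφ_one]⟩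

lemma inv_tensor {t : Nu G} (ht : t ∈ tensorSet G) : t⁻¹ ∈ tensorSet G := by
  obtain ⟨a, b, rfl⟩ := ht
  have : (comm (ι G a) (ιφ G b))⁻¹ = conj (comm (ι G a⁻¹) (ιφ G b)) (ι G a) := by
    rw [← ι_inv]
    simp [comm, conj, mul_assoc]
  rw [this]
  exact conj_tensor _ ⟨a⁻¹, b, rfl⟩

lemma comm_eq_commutator {K : Type*} [Group K] (x y : K) : comm x y = ⁅x⁻¹, y⁻¹⁆ := by
  simp [comm, commutatorElement_def]

lemma tensorSet_subset : tensorSet G ⊆ (tensorSquare G : Set (Nu G)) := by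
  rintro x ⟨a, b, rfl⟩
  rw [comm_eq_commutator]
  exact Subgroup.commutator_mem_commutator
    (Subgroup.inv_mem _ (Subgroup.subset_closure ⟨a, rfl⟩))
    (Subgroup.inv_mem _ (Subgroup.subset_closure ⟨b, rfl⟩))

lemma normal_closure_tensorSet : (Subgroup.closure (tensorSet G)).Normal := by
  constructor
  intro n hn g
  suffices h : conj n g⁻¹ ∈ Subgroup.closure (tensorSet G) by
    simpa [conj] using h
  induction hn using Subgroup.closure_induction with
  | mem t ht => exact Subgroup.subset_closure (conj_tensor _ ht)
  | one =>
      have : conj (1 : Nu G) g⁻¹ = 1 := by simp [conj]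
      rw [this]; exact one_mem _
  | mul a b ha hb iha ihb =>
      have : conj (a * b) g⁻¹ = conj a g⁻¹ * conj b g⁻¹ := by simp [conj, mul_assoc]
      rw [this]; exact mul_mem iha ihb
  | inv a ha iha =>
      have : conj a⁻¹ g⁻¹ = (conj a g⁻¹)⁻¹ := by simp [conj, mul_assoc]
      rw [this]; exact inv_mem iha

end TensorNu
namespace TensorNu

universe u
variable {G : Type u} [Group G]
open scoped commutatorElement

lemma comm_mem_closure (x y : Nu G) (hx : x ∈ GSub G) (hy : y ∈ GφSub G) :
    ⁅x, y⁆ ∈ Subgroup.closure (tensorSet G) := by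
  letI : (Subgroup.closure (tensorSet G)).Normal := normal_closure_tensorSet
  set T := Subgroup.closure (tensorSet G) with hT
  let π := QuotientGroup.mk' T
  suffices h : Commute (π x) (π y) by
    have h1 : π ⁅x, y⁆ = 1 := by
      rw [map_commutatorElement]
      exact commutatorElement_eq_one_iff_commute.2 h
    exact (QuotientGroup.eq_one_iff _).1 h1
  have base : ∀ a b : G, Commute (π (ι G a)) (π (ιφ G b)) := by
    intro a b
    have h1 : π (comm (ι G a) (ιφ G b)) = 1 :=
      (QuotientGroup.eq_one_iff _).2 (Subgroup.subset_closure ⟨a, b, rfl⟩)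
    rw [map_comm', comm_eq_commutator] at h1
    have := commutatorElement_eq_one_iff_commute.1 h1
    simpa using this.inv_left.inv_right
  have step : ∀ a : G, ∀ y ∈ GφSub G, Commute (π (ι G a)) (π y) := by
    intro a y hy
    induction hy using Subgroup.closure_induction with
    | mem z hz => obtain ⟨b, rfl⟩ := hz; exact base a b
    | one => simp
    | mul u v hu hv ihu ihv => rw [map_mul]; exact ihu.mul_right ihv
    | inv u hu ihu => rw [map_inv]; exact ihu.inv_right
  induction hx using Subgroup.closure_induction with
  | mem z hz => obtain ⟨a, rfl⟩ := hz; exact step a y hy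
  | one => simp
  | mul u v hu hv ihu ihv => rw [map_mul]; exact ihu.mul_left ihv
  | inv u hu ihu => rw [map_inv]; exact ihu.inv_left

lemma tensorSquare_eq : tensorSquare G = Subgroup.closure (tensorSet G) := by
  refine le_antisymm ?_ ((Subgroup.closure_le _).2 tensorSet_subset)
  rw [tensorSquare, Subgroup.commutator_le]
  intro x hx y hy
  exact comm_mem_closure x y hx hy

lemma exists_tensor_list {x : Nu G} (hx : x ∈ tensorSquare G) :
    ∃ l : List (Nu G), (∀ t ∈ l, t ∈ tensorSet G) ∧ l.prod = x := by
  rw [tensorSquare_eq] at hx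
  induction hx using Subgroup.closure_induction with
  | mem t ht => exact ⟨[t], by simpa using ht, by simp⟩
  | one => exact ⟨[], by simp, by simp⟩
  | mul u v hu hv ihu ihv =>
      obtain ⟨l₁, h₁, p₁⟩ := ihu
      obtain ⟨l₂, h₂, p₂⟩ := ihv
      exact ⟨l₁ ++ l₂, by
        intro t ht
        rcases List.mem_append.1 ht with h | h
        · exact h₁ t h
        · exact h₂ t h, by rw [List.prod_append, p₁, p₂]⟩
  | inv u hu ihu =>
      obtain ⟨l, hl, pl⟩ := ihu
      refine ⟨(l.map (·⁻¹)).reverse, ?_, ?_⟩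
      · intro t ht
        rw [List.mem_reverse, List.mem_map] at ht
        obtain ⟨s, hs, rfl⟩ := ht
        exact inv_tensor (hl s hs)
      · rw [← List.prod_inv_reverse, pl]

end TensorNu
namespace TensorNu

universe u

/-- If `C` is a subgroup of finite index `m` in `[G,G^φ]`, then every right coset `Cb`,
`b ∈ [G,G^φ]`, contains an element which is a product of at most `m - 1` tensors. -/
theorem coset_contains_short_element (G : Type u) [Group G] (m : ℕ) (hm : 0 < m)
    (C : Subgroup (Nu G)) (hC : C ≤ tensorSquare G)
    (hidx : C.relIndex (tensorSquare G) = m) :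
    ∀ b ∈ tensorSquare G, ∃ h : Nu G, (∃ c ∈ C, h = c * b) ∧
      ∃ l : List (Nu G), (∀ t ∈ l, t ∈ tensorSet G) ∧ l.prod = h ∧ l.length ≤ m - 1 := by
  intro b hb
  set N := C.subgroupOf (tensorSquare G) with hN
  have hQcard : Nat.card (↥(tensorSquare G) ⧸ N) = m := by
    rw [← Subgroup.index_eq_card]; exact hidx
  have hQfin : Finite (↥(tensorSquare G) ⧸ N) :=
    (Nat.card_pos_iff.mp (hQcard ▸ hm)).2
  set A : ℕ → Set (↥(tensorSquare G) ⧸ N) := fun k =>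
    {q | ∃ h : ↥(tensorSquare G), (∃ l : List (Nu G), (∀ t ∈ l, t ∈ tensorSet G) ∧
      l.prod = (h : Nu G) ∧ l.length ≤ k) ∧ QuotientGroup.mk h = q} with hA
  have hmono : ∀ {j k : ℕ}, j ≤ k → A j ⊆ A k := by
    intro j k hjk q hq
    obtain ⟨h, ⟨l, hl, hp, hlen⟩, hmk⟩ := hq
    exact ⟨h, ⟨l, hl, hp, hlen.trans hjk⟩, hmk⟩
  have hcover : ∀ q, ∃ k, q ∈ A k := by
    intro q
    obtain ⟨h, rfl⟩ := QuotientGroup.mk_surjective q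
    obtain ⟨l, hl, hp⟩ := exists_tensor_list h.2
    exact ⟨l.length, h, ⟨l, hl, hp, le_refl _⟩, rfl⟩
  have hstep : ∀ k : ℕ, A (k+1) ⊆ A k → A (k+2) ⊆ A (k+1) := by
    intro k hk q hq
    obtain ⟨h, ⟨l, hl, hp, hlen⟩, hmk⟩ := hq
    by_cases hsh : l.length ≤ k + 1
    · exact ⟨h, ⟨l, hl, hp, hsh⟩, hmk⟩
    · have hne : l ≠ [] := by
        intro h0; rw [h0] at hsh; simp at hsh
      have hcons : l.head hne :: l.tail = l := List.cons_head_tail hne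
      have hth : l.head hne ∈ tensorSet G := hl _ (List.head_mem hne)
      have htl : ∀ t ∈ l.tail, t ∈ tensorSet G := fun t ht =>
        hl t (List.mem_of_mem_tail ht)
      have hpmem : l.tail.prod ∈ tensorSquare G :=
        list_prod_mem (fun x hx => tensorSet_subset (htl x hx))
      have hhmem : l.head hne ∈ tensorSquare G := tensorSet_subset hth
      have hdlen : l.tail.length ≤ k + 1 := by
        have := l.length_tail; omega
      have h1 : QuotientGroup.mk (⟨l.tail.prod, hpmem⟩ : ↥(tensorSquare G)) ∈ A k :=
        hk ⟨⟨l.tail.prod, hpmem⟩, ⟨l.tail, htl, rfl, hdlen⟩, rfl⟩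
      obtain ⟨h₂, ⟨l₂, hl₂, hp₂, hlen₂⟩, hmk₂⟩ := h1
      refine ⟨⟨l.head hne, hhmem⟩ * h₂, ⟨l.head hne :: l₂, ?_, ?_, ?_⟩, ?_⟩
      · intro t ht
        rcases List.mem_cons.1 ht with h' | h'
        · rw [h']; exact hth
        · exact hl₂ t h'
      · rw [List.prod_cons, hp₂]; rfl
      · simp only [List.length_cons]; omega
      · have hEq : (QuotientGroup.mk ((⟨l.head hne, hhmem⟩ : ↥(tensorSquare G)) * h₂) :
              ↥(tensorSquare G) ⧸ N) =
            QuotientGroup.mk ((⟨l.head hne, hhmem⟩ : ↥(tensorSquare G)) * ⟨l.tail.prod, hpmem⟩) := by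
          rw [QuotientGroup.eq] at hmk₂ ⊢
          rw [mul_inv_rev, mul_assoc, inv_mul_cancel_left]
          exact hmk₂
        rw [hEq]
        have hhh : ((⟨l.head hne, hhmem⟩ : ↥(tensorSquare G)) * ⟨l.tail.prod, hpmem⟩) = h := by
          apply Subtype.ext
          show l.head hne * l.tail.prod = (h : Nu G)
          rw [← hp]
          conv_rhs => rw [← hcons]
          rw [List.prod_cons]
        rw [hhh]
        exact hmk
  have hstab : ∀ k : ℕ, A (k+1) ⊆ A k → ∀ q, q ∈ A k := by
    intro k hk q
    have step2 : ∀ j : ℕ, A (k + j + 1) ⊆ A (k + j) := by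
      intro j
      induction j with
      | zero => exact hk
      | succ i ih => exact hstep (k + i) ih
    have chain : ∀ j : ℕ, A (k + j) ⊆ A k := by
      intro j
      induction j with
      | zero => exact Set.Subset.refl _
      | succ i ih => exact fun q hq => ih (step2 i hq)
    obtain ⟨n, hn⟩ := hcover q
    exact chain n (hmono (Nat.le_add_left n k) hn)
  have hgrow : ∀ k : ℕ, A k = Set.univ ∨ k + 1 ≤ (A k).ncard := by
    intro k
    induction k with
    | zero =>
        right
        have h1 : QuotientGroup.mk (1 : ↥(tensorSquare G)) ∈ A 0 :=
          ⟨1, ⟨[], by simp, by simp, by simp⟩, rfl⟩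
        have h2 : (A 0).Nonempty := ⟨_, h1⟩
        have := (Set.ncard_pos (A 0).toFinite).2 h2
        omega
    | succ k ih =>
        rcases ih with h | h
        · left; exact Set.eq_univ_of_univ_subset (h ▸ hmono (Nat.le_succ k))
        · by_cases hsub : A (k+1) ⊆ A k
          · left
            have hAk : A k = Set.univ := Set.eq_univ_of_forall (hstab k hsub)
            exact Set.eq_univ_of_univ_subset (hAk ▸ hmono (Nat.le_succ k))
          · right
            have hne : A k ≠ A (k+1) := fun he => hsub (he ▸ Set.Subset.refl _)
            have hss : A k ⊂ A (k+1) :=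
              (Set.ssubset_iff_subset_ne).2 ⟨hmono (Nat.le_succ k), hne⟩
            have := Set.ncard_lt_ncard hss (A (k+1)).toFinite
            omega
  have hfinal : A (m-1) = Set.univ := by
    rcases hgrow (m-1) with h | h
    · exact h
    · refine Set.eq_of_subset_of_ncard_le (Set.subset_univ _) ?_ Set.finite_univ
      rw [Set.ncard_univ, hQcard]
      omega
  have hbq : QuotientGroup.mk ((⟨b, hb⟩ : ↥(tensorSquare G))⁻¹) ∈ A (m-1) := by
    rw [hfinal]; trivial
  obtain ⟨h', ⟨l, hl, hp, hlen⟩, hmk⟩ := hbq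
  have hmem : (h' : Nu G)⁻¹ * b⁻¹ ∈ C := by
    have h2 := QuotientGroup.eq.mp hmk
    rw [hN, Subgroup.mem_subgroupOf] at h2
    simpa using h2
  refine ⟨(h' : Nu G)⁻¹, ⟨(h' : Nu G)⁻¹ * b⁻¹, hmem, (inv_mul_cancel_right _ b).symm⟩,
    (l.map (·⁻¹)).reverse, ?_, ?_, ?_⟩
  · intro t ht
    rw [List.mem_reverse, List.mem_map] at ht
    obtain ⟨s, hs, rfl⟩ := ht
    exact inv_tensor (hl s hs)
  · rw [← List.prod_inv_reverse, hp]
  · simpa using hlen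

end TensorNu
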